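/- Let C be a category with all finite limits and colimits and let F : C ⥤ E be a cut, where E is the preorder with two objects 0 < 1 viewed as a category (e.g. Fin 2 with its order). Define W = {f : A ⟶ B | F.obj A = F.obj B}, Cof = {f : A ⟶ B | F.obj B = 1} ∪ {isomorphisms}, and Fib = {f : A ⟶ B | F.obj A = 0} ∪ {isomorphisms}. Then (W, Cof, Fib) is a model structure on C (the balanced model structure associated to F), and it is both left proper and right proper: the pushout of a morphism of W along a morphism of Cof lies in W, and the pullback of a morphism of W along a morphism of Fib lies in W. -/

import Mathlib

open CategoryTheory CategoryTheory.Limits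

universe v u

section Preliminaries

variable {C : Type u} [Category.{v} C]

/-- The right lifting class of a class of morphisms. -/
def MorphismPropertyRLP (S : MorphismProperty C) : MorphismProperty C :=
  fun _ _ g => ∀ ⦃A B : C⦄ (f : A ⟶ B), S f → HasLiftingProperty f g

/-- The left lifting class of a class of morphisms. -/
def MorphismPropertyLLP (S : MorphismProperty C) : MorphismProperty C :=
  fun _ _ f => ∀ ⦃X Y : C⦄ (g : X ⟶ Y), S g → HasLiftingProperty f g

/-- `(L, R)` is a weak factorization system. -/
structure IsWFS (L R : MorphismProperty C) : Prop where
  llp_eq : L = MorphismPropertyLLP R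
  rlp_eq : R = MorphismPropertyRLP L
  factor : ∀ ⦃X Y : C⦄ (f : X ⟶ Y),
    ∃ (Z : C) (l : X ⟶ Z) (r : Z ⟶ Y), L l ∧ R r ∧ l ≫ r = f

/-- The two-out-of-three property for a class of morphisms. -/
def TwoOfThree (W : MorphismProperty C) : Prop :=
  ∀ ⦃X Y Z : C⦄ (f : X ⟶ Y) (g : Y ⟶ Z),
    (W f → W g → W (f ≫ g)) ∧ (W f → W (f ≫ g) → W g) ∧ (W g → W (f ≫ g) → W f)

/-- `(W, Cof, Fib)` is a model structure. -/
structure IsModelStructure (W Cof Fib : MorphismProperty C) : Prop where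
  twoOfThree : TwoOfThree W
  wfs₁ : IsWFS Cof (fun _ _ f => Fib f ∧ W f)
  wfs₂ : IsWFS (fun _ _ f => Cof f ∧ W f) Fib

end Preliminaries

section Aux

variable {C : Type u} [Category.{v} C]

lemma cut_le (F : C ⥤ Fin 2) {X Y : C} (f : X ⟶ Y) : F.obj X ≤ F.obj Y :=
  leOfHom (F.map f)

lemma cut_eq_of_iso (F : C ⥤ Fin 2) {X Y : C} (f : X ⟶ Y) [IsIso f] :
    F.obj X = F.obj Y :=
  le_antisymm (cut_le F f) (cut_le F (inv f))

lemma isIso_of_self_lift {X Y : C} (f : X ⟶ Y) (h : HasLiftingProperty f f) : IsIso f := by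
  have sq : CommSq (𝟙 X) f f (𝟙 Y) := ⟨by simp⟩
  exact ⟨sq.lift, sq.fac_left, sq.fac_right⟩

lemma vacuous_lift (F : C ⥤ Fin 2) {A B X Y : C} (f : A ⟶ B) (g : X ⟶ Y)
    (hB : F.obj B = 1) (hY : F.obj Y = 0) : HasLiftingProperty f g := by
  constructor
  intro u v sq
  exact absurd (cut_le F v) (by rw [hB, hY]; decide)

lemma vacuous_lift' (F : C ⥤ Fin 2) {A B X Y : C} (f : A ⟶ B) (g : X ⟶ Y)
    (hA : F.obj A = 1) (hX : F.obj X = 0) : HasLiftingProperty f g := by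
  constructor
  intro u v sq
  exact absurd (cut_le F u) (by rw [hA, hX]; decide)

lemma fin2_eq_zero {a : Fin 2} (h : a ≠ 1) : a = 0 := by omega
lemma fin2_le_zero {a : Fin 2} (h : a ≤ 0) : a = 0 := by omega
lemma fin2_one_le {a : Fin 2} (h : (1 : Fin 2) ≤ a) : a = 1 := by omega

end Aux

/-- The balanced model structure associated to a cut `F : C ⥤ Fin 2`:
weak equivalences `{f : A ⟶ B | F.obj A = F.obj B}`, cofibrations
`{f : A ⟶ B | F.obj B = 1} ∪ isos`, fibrations `{f : A ⟶ B | F.obj A = 0} ∪ isos`.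
It is both left proper and right proper. -/
theorem balanced_modelStructure_of_cut
    {C : Type u} [Category.{v} C] [HasFiniteLimits C] [HasFiniteColimits C]
    (F : C ⥤ Fin 2)
    (W : MorphismProperty C) (hW : W = fun A B _ => F.obj A = F.obj B)
    (Cof : MorphismProperty C) (hCof : Cof = fun A B f => F.obj B = 1 ∨ IsIso f)
    (Fib : MorphismProperty C) (hFib : Fib = fun A B f => F.obj A = 0 ∨ IsIso f) :
    IsModelStructure W Cof Fib ∧
    (∀ ⦃A B C' P : C⦄ (w : A ⟶ C') (i : A ⟶ B) (h : C' ⟶ P) (k : B ⟶ P),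
      IsPushout w i h k → W w → Cof i → W k) ∧
    (∀ ⦃Q X B Y : C⦄ (q : Q ⟶ X) (w' : Q ⟶ B) (p : X ⟶ Y) (w : B ⟶ Y),
      IsPullback q w' p w → W w → Fib p → W q) := by
  subst hW hCof hFib
  -- lifting between cofibrations and trivial fibrations
  have lift₁ : ∀ ⦃A B : C⦄ (f : A ⟶ B) ⦃X Y : C⦄ (g : X ⟶ Y),
      (F.obj B = 1 ∨ IsIso f) → ((F.obj X = 0 ∨ IsIso g) ∧ F.obj X = F.obj Y) →
      HasLiftingProperty f g := by
    intro A B f X Y g hf hg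
    rcases hf with hf | hf
    · rcases hg.1 with hg0 | hgi
      · exact vacuous_lift F f g hf (hg.2 ▸ hg0)
      · exact inferInstance
    · exact HasLiftingProperty.of_left_iso f g
  -- lifting between trivial cofibrations and fibrations
  have lift₂ : ∀ ⦃A B : C⦄ (f : A ⟶ B) ⦃X Y : C⦄ (g : X ⟶ Y),
      ((F.obj B = 1 ∨ IsIso f) ∧ F.obj A = F.obj B) → (F.obj X = 0 ∨ IsIso g) →
      HasLiftingProperty f g := by
    intro A B f X Y g hf hg
    rcases hf.1 with hf1 | hfi
    · rcases hg with hg | hg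
      · exact vacuous_lift' F f g (hf.2.trans hf1) hg
      · exact inferInstance
    · exact HasLiftingProperty.of_left_iso f g
  refine ⟨⟨?_, ⟨?_, ?_, ?_⟩, ⟨?_, ?_, ?_⟩⟩, ?_, ?_⟩
  · -- two out of three
    intro X Y Z f g
    exact ⟨fun h1 h2 => h1.trans h2, fun h1 h2 => h1.symm.trans h2,
      fun h1 h2 => h2.trans h1.symm⟩
  · -- Cof = LLP (Fib ∩ W)
    funext A B f
    apply propext
    constructor
    · intro hf X Y g hg
      exact lift₁ f g hf hg
    · intro hf
      by_cases hB : F.obj B = 1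
      · exact Or.inl hB
      · have hB0 : F.obj B = 0 := fin2_eq_zero hB
        have hA0 : F.obj A = 0 := fin2_le_zero (hB0 ▸ cut_le F f)
        exact Or.inr (isIso_of_self_lift f
          (hf f ⟨Or.inl hA0, hA0.trans hB0.symm⟩))
  · -- Fib ∩ W = RLP Cof
    funext X Y g
    apply propext
    constructor
    · intro hg A B f hf
      exact lift₁ f g hf hg
    · intro hg
      by_cases hY : F.obj Y = 1
      · have : IsIso g := isIso_of_self_lift g (hg g (Or.inl hY))
        exact ⟨Or.inr this, cut_eq_of_iso F g⟩
      · have hY0 : F.obj Y = 0 := fin2_eq_zero hY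
        have hX0 : F.obj X = 0 := fin2_le_zero (hY0 ▸ cut_le F g)
        exact ⟨Or.inl hX0, hX0.trans hY0.symm⟩
  · -- factorization (Cof, Fib ∩ W)
    intro X Y f
    by_cases hY : F.obj Y = 1
    · exact ⟨Y, f, 𝟙 Y, Or.inl hY,
        ⟨Or.inr inferInstance, rfl⟩, Category.comp_id f⟩
    · have hY0 : F.obj Y = 0 := fin2_eq_zero hY
      have hX0 : F.obj X = 0 := fin2_le_zero (hY0 ▸ cut_le F f)
      exact ⟨X, 𝟙 X, f, Or.inr inferInstance,
        ⟨Or.inl hX0, hX0.trans hY0.symm⟩, Category.id_comp f⟩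
  · -- Cof ∩ W = LLP Fib
    funext A B f
    apply propext
    constructor
    · intro hf X Y g hg
      exact lift₂ f g hf hg
    · intro hf
      by_cases hA : F.obj A = 0
      · have : IsIso f := isIso_of_self_lift f (hf f (Or.inl hA))
        exact ⟨Or.inr this, cut_eq_of_iso F f⟩
      · have hA1 : F.obj A = 1 := by omega
        have hB1 : F.obj B = 1 := fin2_one_le (hA1 ▸ cut_le F f)
        exact ⟨Or.inl hB1, hA1.trans hB1.symm⟩
  · -- Fib = RLP (Cof ∩ W)
    funext X Y g
    apply propext
    constructor
    · intro hg A B f hf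
      exact lift₂ f g hf hg
    · intro hg
      by_cases hX : F.obj X = 0
      · exact Or.inl hX
      · have hX1 : F.obj X = 1 := by omega
        have hY1 : F.obj Y = 1 := fin2_one_le (hX1 ▸ cut_le F g)
        exact Or.inr (isIso_of_self_lift g
          (hg g ⟨Or.inl hY1, hX1.trans hY1.symm⟩))
  · -- factorization (Cof ∩ W, Fib)
    intro X Y f
    by_cases hX : F.obj X = 0
    · exact ⟨X, 𝟙 X, f, ⟨Or.inr inferInstance, rfl⟩,
        Or.inl hX, Category.id_comp f⟩
    · have hX1 : F.obj X = 1 := by omega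
      have hY1 : F.obj Y = 1 := fin2_one_le (hX1 ▸ cut_le F f)
      exact ⟨Y, f, 𝟙 Y, ⟨Or.inl hY1, hX1.trans hY1.symm⟩,
        Or.inr inferInstance, Category.comp_id f⟩
  · -- left proper
    intro A B C' P w i h k hpo hw hi
    rcases hi with hi | hi
    · -- F.obj B = 1, so F.obj P = 1
      have : F.obj P = 1 := fin2_one_le (hi ▸ cut_le F k)
      exact (hi.trans this.symm : F.obj B = F.obj P)
    · -- i is an iso: construct P ⟶ C'
      have d : P ⟶ C' := hpo.desc (𝟙 C') (inv i ≫ w) (by simp)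
      have h1 : F.obj P ≤ F.obj C' := cut_le F d
      have h2 : F.obj B ≤ F.obj P := cut_le F k
      have h3 : F.obj A = F.obj B := cut_eq_of_iso F i
      have h4 : F.obj A = F.obj C' := hw
      omega
  · -- right proper
    intro Q X B Y q w' p w hpb hw hp
    rcases hp with hp | hp
    · -- F.obj X = 0, so F.obj Q = 0
      have : F.obj Q = 0 := fin2_le_zero (hp ▸ cut_le F q)
      exact this.trans hp.symm
    · -- p is an iso: construct B ⟶ Q
      have l : B ⟶ Q := hpb.lift (w ≫ inv p) (𝟙 B) (by simp)
      have h1 : F.obj B ≤ F.obj Q := cut_le F l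
      have h2 : F.obj Q ≤ F.obj X := cut_le F q
      have h3 : F.obj X = F.obj Y := cut_eq_of_iso F p
      have h4 : F.obj B = F.obj Y := hw
      omega
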